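/- Let a > 0, γ > 1, and 0 < δ ≤ 1/2, and let q : [0,∞) → ℝ be Lipschitz continuous with q(ρ) = 0 for all ρ ∉ [2δ, 1/(2δ)]. Then there exists a constant C > 0 such that for every r ∈ [2δ, 1/(2δ)] and every ρ ≥ 0, one has (q(ρ) − q(r))² ≤ C · E(ρ|r), where E(ρ|r) = H(ρ) − H'(r)(ρ − r) − H(r). -/

import Mathlib

open Set Real

lemma myTangent {S : Set ℝ} {f : ℝ → ℝ} {f' x y : ℝ}
    (hf : ConvexOn ℝ S f) (hx : x ∈ S) (hy : y ∈ S) (hd : HasDerivAt f f' x) :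
    f x + f' * (y - x) ≤ f y := by
  rcases lt_trichotomy x y with h | rfl | h
  · have h1 := hf.le_slope_of_hasDerivAt hx hy h hd
    rw [slope_def_field] at h1
    have h2 : 0 < y - x := sub_pos.mpr h
    rw [le_div_iff₀ h2] at h1
    linarith
  · simp
  · have h1 := hf.slope_le_of_hasDerivAt hy hx h hd
    rw [slope_def_field] at h1
    have h2 : 0 < x - y := sub_pos.mpr h
    rw [div_le_iff₀ h2] at h1
    linarith

lemma rpow_hasDeriv {x p : ℝ} (hx : 0 < x) :
    HasDerivAt (fun t : ℝ => t ^ p) (p * x ^ (p - 1)) x :=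
  Real.hasDerivAt_rpow_const (Or.inl hx.ne')

lemma strong_convex {a γ m δ₀ R₀ : ℝ} (hγ : 1 < γ) (hδ₀ : 0 < δ₀)
    (hm' : ∀ s ∈ Set.Icc δ₀ R₀, m ≤ a * γ * s ^ (γ - 2)) :
    ∀ x ∈ Set.Icc δ₀ R₀, ∀ y ∈ Set.Icc δ₀ R₀,
      m / 2 * (x - y) ^ 2 ≤
        a / (γ - 1) * x ^ γ - a * γ / (γ - 1) * y ^ (γ - 1) * (x - y)
          - a / (γ - 1) * y ^ γ := by
  have hγ1 : (0:ℝ) < γ - 1 := by linarith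
  set g : ℝ → ℝ := fun t => a / (γ - 1) * t ^ γ - m / 2 * t ^ 2 with hg
  set g' : ℝ → ℝ := fun t => a * γ / (γ - 1) * t ^ (γ - 1) - m * t with hg'
  set g'' : ℝ → ℝ := fun t => a * γ * t ^ (γ - 2) - m with hg''
  have hd1 : ∀ t : ℝ, 0 < t → HasDerivAt g (g' t) t := by
    intro t ht
    have h1 : HasDerivAt (fun s : ℝ => a / (γ - 1) * s ^ γ)
        (a / (γ - 1) * (γ * t ^ (γ - 1))) t := (rpow_hasDeriv ht).const_mul _
    have h2 : HasDerivAt (fun s : ℝ => m / 2 * s ^ 2) (m / 2 * (2 * t)) t := by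
      simpa using (((hasDerivAt_pow 2 t)).const_mul (m / 2))
    have := h1.sub h2
    refine this.congr_deriv ?_
    simp only [hg']
    field_simp
  have hd2 : ∀ t : ℝ, 0 < t → HasDerivAt g' (g'' t) t := by
    intro t ht
    have h1 : HasDerivAt (fun s : ℝ => a * γ / (γ - 1) * s ^ (γ - 1))
        (a * γ / (γ - 1) * ((γ - 1) * t ^ (γ - 1 - 1))) t := (rpow_hasDeriv ht).const_mul _
    have h2 : HasDerivAt (fun s : ℝ => m * s) m t := by
      simpa using (hasDerivAt_id t).const_mul m
    have := h1.sub h2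
    refine this.congr_deriv ?_
    simp only [hg'']
    have he : γ - 1 - 1 = γ - 2 := by ring
    rw [he]
    field_simp
  have hconv : ConvexOn ℝ (Set.Icc δ₀ R₀) g := by
    apply convexOn_of_hasDerivWithinAt2_nonneg (convex_Icc _ _) (f' := g') (f'' := g'')
    · intro t ht
      have ht0 : 0 < t := lt_of_lt_of_le hδ₀ ht.1
      have : ContinuousAt g t := by
        have h1 : ContinuousAt (fun s : ℝ => s ^ γ) t :=
          Real.continuousAt_rpow_const t γ (Or.inl ht0.ne')
        exact ((h1.const_mul _).sub ((continuous_pow 2).continuousAt.const_mul _))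
      exact this.continuousWithinAt
    · intro t ht
      rw [interior_Icc] at ht
      exact (hd1 t (lt_trans hδ₀ ht.1)).hasDerivWithinAt
    · intro t ht
      rw [interior_Icc] at ht
      exact (hd2 t (lt_trans hδ₀ ht.1)).hasDerivWithinAt
    · intro t ht
      rw [interior_Icc] at ht
      have := hm' t ⟨ht.1.le, ht.2.le⟩
      simp only [hg'']
      linarith
  intro x hx y hy
  have hy0 : 0 < y := lt_of_lt_of_le hδ₀ hy.1
  have := myTangent hconv hy hx (hd1 y hy0)
  simp only [hg, hg'] at this
  nlinarith [this]

theorem pressure_perturbation_controlled_by_relative_energy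
    (a γ δ : ℝ) (ha : 0 < a) (hγ : 1 < γ) (hδ0 : 0 < δ) (hδ : δ ≤ 1 / 2)
    (q : ℝ → ℝ) (K : NNReal) (hq : LipschitzOnWith K q (Set.Ici 0))
    (hq0 : ∀ ρ : ℝ, 0 ≤ ρ → ρ ∉ Set.Icc (2 * δ) (1 / (2 * δ)) → q ρ = 0)
    (H H' : ℝ → ℝ)
    (hH : ∀ ρ : ℝ, H ρ = a / (γ - 1) * ρ ^ γ)
    (hH' : ∀ r : ℝ, H' r = a * γ / (γ - 1) * r ^ (γ - 1)) :
    ∃ C > (0 : ℝ), ∀ r ∈ Set.Icc (2 * δ) (1 / (2 * δ)), ∀ ρ : ℝ, 0 ≤ ρ →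
      (q ρ - q r) ^ 2 ≤ C * (H ρ - H' r * (ρ - r) - H r) := by
  have hγ1 : (0:ℝ) < γ - 1 := by linarith
  have hγ0 : (0:ℝ) < γ := by linarith
  set Rδ : ℝ := 1 / (2 * δ) with hRδdef
  set R₁ : ℝ := 1 / δ with hR₁def
  have hRδ0 : 0 < Rδ := by positivity
  have hR₁0 : 0 < R₁ := by positivity
  have hRδR₁ : Rδ ≤ R₁ := by
    rw [hRδdef, hR₁def, div_le_div_iff₀ (by positivity) hδ0]
    nlinarith
  have hR₁eq : R₁ = 2 * Rδ := by rw [hRδdef, hR₁def]; field_simp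
  have hδR₁ : δ ≤ R₁ := by
    rw [hR₁def, le_div_iff₀ hδ0]; nlinarith
  -- the modulus of convexity
  set m : ℝ := a * γ * min (δ ^ (γ - 2)) (R₁ ^ (γ - 2)) with hmdef
  have hm : 0 < m := by
    have h1 : (0:ℝ) < δ ^ (γ - 2) := Real.rpow_pos_of_pos hδ0 _
    have h2 : (0:ℝ) < R₁ ^ (γ - 2) := Real.rpow_pos_of_pos hR₁0 _
    have := lt_min h1 h2
    positivity
  have hm' : ∀ s ∈ Set.Icc δ R₁, m ≤ a * γ * s ^ (γ - 2) := by
    intro s hs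
    have hs0 : 0 < s := lt_of_lt_of_le hδ0 hs.1
    rcases le_or_gt 2 γ with h2 | h2
    · have h3 : δ ^ (γ - 2) ≤ s ^ (γ - 2) :=
        Real.rpow_le_rpow hδ0.le hs.1 (by linarith)
      have hmin : min (δ ^ (γ - 2)) (R₁ ^ (γ - 2)) ≤ s ^ (γ - 2) :=
        le_trans (min_le_left _ _) h3
      rw [hmdef]
      exact mul_le_mul_of_nonneg_left hmin (by positivity : (0:ℝ) ≤ a * γ)
    · have h3 : R₁ ^ (γ - 2) ≤ s ^ (γ - 2) :=
        Real.rpow_le_rpow_of_nonpos hs0 hs.2 (by linarith)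
      have hmin : min (δ ^ (γ - 2)) (R₁ ^ (γ - 2)) ≤ s ^ (γ - 2) :=
        le_trans (min_le_right _ _) h3
      rw [hmdef]
      exact mul_le_mul_of_nonneg_left hmin (by positivity : (0:ℝ) ≤ a * γ)
  -- strong convexity bound in terms of H, H'
  have hstrong : ∀ x ∈ Set.Icc δ R₁, ∀ y ∈ Set.Icc δ R₁,
      m / 2 * (x - y) ^ 2 ≤ H x - H' y * (x - y) - H y := by
    intro x hx y hy
    rw [hH x, hH y, hH' y]
    exact strong_convex hγ hδ0 hm' x hx y hy
  -- convexity of H on [0, ∞) and the tangent-line inequality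
  have hHconv : ConvexOn ℝ (Set.Ici (0:ℝ)) (fun x : ℝ => a / (γ - 1) * x ^ γ) := by
    have := (convexOn_rpow hγ.le).smul (c := a / (γ - 1)) (by positivity)
    simpa [smul_eq_mul] using this
  have htan : ∀ r : ℝ, 0 < r → ∀ ρ : ℝ, 0 ≤ ρ → H r + H' r * (ρ - r) ≤ H ρ := by
    intro r hr ρ hρ
    have hd : HasDerivAt (fun x : ℝ => a / (γ - 1) * x ^ γ)
        (a / (γ - 1) * (γ * r ^ (γ - 1))) r := (rpow_hasDeriv hr).const_mul _
    have hd' : HasDerivAt (fun x : ℝ => a / (γ - 1) * x ^ γ) (H' r) r := by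
      have he : H' r = a / (γ - 1) * (γ * r ^ (γ - 1)) := by
        rw [hH' r]; field_simp
      rw [he]; exact hd
    have := myTangent hHconv (mem_Ici.mpr hr.le) (mem_Ici.mpr hρ) hd'
    rw [hH r, hH ρ]
    simpa using this
  -- H' is monotone on [0, ∞)
  have hH'mono : ∀ x y : ℝ, 0 ≤ x → x ≤ y → H' x ≤ H' y := by
    intro x y hx hxy
    rw [hH' x, hH' y]
    have : x ^ (γ - 1) ≤ y ^ (γ - 1) := Real.rpow_le_rpow hx hxy (by linarith)
    exact mul_le_mul_of_nonneg_left this (by positivity)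
  -- Lipschitz bound
  have hK0 : (0:ℝ) ≤ (K:ℝ) := K.coe_nonneg
  have hlip : ∀ x y : ℝ, 0 ≤ x → 0 ≤ y → (q x - q y) ^ 2 ≤ (K:ℝ) ^ 2 * (x - y) ^ 2 := by
    intro x y hx hy
    have h := hq.dist_le_mul x (mem_Ici.mpr hx) y (mem_Ici.mpr hy)
    rw [Real.dist_eq, Real.dist_eq] at h
    have h2 : |q x - q y| ^ 2 ≤ ((K:ℝ) * |x - y|) ^ 2 :=
      pow_le_pow_left₀ (abs_nonneg _) h 2
    rw [mul_pow, sq_abs, sq_abs] at h2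
    exact h2
  have hq00 : q 0 = 0 := by
    apply hq0 0 le_rfl
    intro h
    have := h.1
    linarith
  -- choose the constant
  set P : ℝ := Rδ ^ 2 / δ ^ 2 with hPdef
  have hP0 : 0 ≤ P := by positivity
  set C : ℝ := 2 * ((K:ℝ) ^ 2 + 1) * (1 + P) / m with hCdef
  have hC0 : 0 < C := by positivity
  have hCm : C * (m / 2) = ((K:ℝ) ^ 2 + 1) * (1 + P) := by
    rw [hCdef]; field_simp
  have hPδ : P * δ ^ 2 = Rδ ^ 2 := by
    rw [hPdef]; field_simp
  have hC1 : (K:ℝ) ^ 2 ≤ C * (m / 2) := by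
    rw [hCm]; nlinarith [hP0, sq_nonneg (K:ℝ)]
  have hC2 : (K:ℝ) ^ 2 * Rδ ^ 2 ≤ C * (m / 2) * δ ^ 2 := by
    rw [hCm]
    have h3 : (K:ℝ) ^ 2 * (P * δ ^ 2) = (K:ℝ) ^ 2 * Rδ ^ 2 := by rw [hPδ]
    nlinarith [h3, hPδ, sq_nonneg δ, sq_nonneg Rδ, mul_nonneg (sq_nonneg (K:ℝ)) (sq_nonneg δ)]
  clear_value Rδ R₁ m P C
  refine ⟨C, hC0, ?_⟩
  intro r hr ρ hρ
  have hr2δ : 2 * δ ≤ r := hr.1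
  have hrRδ : r ≤ Rδ := hr.2
  have hr0 : 0 < r := by linarith
  have hrIcc : r ∈ Set.Icc δ R₁ := ⟨by linarith, le_trans hrRδ hRδR₁⟩
  -- bound on q r
  have hqr : (q r) ^ 2 ≤ (K:ℝ) ^ 2 * Rδ ^ 2 := by
    have h1 := hlip r 0 hr0.le le_rfl
    rw [hq00, sub_zero, sub_zero] at h1
    have h2 : r ^ 2 ≤ Rδ ^ 2 := pow_le_pow_left₀ hr0.le hrRδ 2
    exact le_trans h1 (mul_le_mul_of_nonneg_left h2 (sq_nonneg (K:ℝ)))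
  rcases le_or_gt ρ R₁ with hρR₁ | hρR₁
  · rcases le_or_gt δ ρ with hδρ | hδρ
    · -- main case : ρ ∈ [δ, R₁]
      have hE := hstrong ρ ⟨hδρ, hρR₁⟩ r hrIcc
      have hL := hlip ρ r hρ hr0.le
      have hCE : C * (m / 2 * (ρ - r) ^ 2) ≤ C * (H ρ - H' r * (ρ - r) - H r) :=
        mul_le_mul_of_nonneg_left hE hC0.le
      have hKC := mul_le_mul_of_nonneg_right hC1 (sq_nonneg (ρ - r))
      linarith [hCE, hKC, hL]
    · -- small case : ρ < δ
      have hqρ : q ρ = 0 := by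
        apply hq0 ρ hρ
        intro h
        have := h.1
        linarith
      have hEδ := hstrong δ ⟨le_rfl, hδR₁⟩ r hrIcc
      -- monotonicity : E(ρ|r) ≥ E(δ|r)
      have htanδ := htan δ hδ0 ρ hρ
      have h1 : H' δ ≤ H' r := hH'mono δ r hδ0.le (by linarith)
      have h1' := mul_le_mul_of_nonneg_right h1 (by linarith : (0:ℝ) ≤ δ - ρ)
      have hmono : H δ - H' r * (δ - r) - H r ≤ H ρ - H' r * (ρ - r) - H r := by
        linarith [htanδ, h1']
      have h2 : δ ^ 2 ≤ (δ - r) ^ 2 := by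
        have he : (δ - r) ^ 2 - δ ^ 2 = r * (r - 2 * δ) := by ring
        have := mul_nonneg hr0.le (by linarith : (0:ℝ) ≤ r - 2 * δ)
        linarith
      have h2' := mul_le_mul_of_nonneg_left h2 (by linarith : (0:ℝ) ≤ m / 2)
      have hEδ2 : m / 2 * δ ^ 2 ≤ H ρ - H' r * (ρ - r) - H r := by linarith
      have hCE : C * (m / 2 * δ ^ 2) ≤ C * (H ρ - H' r * (ρ - r) - H r) :=
        mul_le_mul_of_nonneg_left hEδ2 hC0.le
      rw [hqρ]
      have hz : (0 - q r) ^ 2 = (q r) ^ 2 := by ring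
      rw [hz]
      linarith [hCE, hC2, hqr]
  · -- large case : ρ > R₁
    have hqρ : q ρ = 0 := by
      apply hq0 ρ hρ
      intro h
      have h2 : ρ ≤ Rδ := h.2
      linarith
    have hER := hstrong R₁ ⟨hδR₁, le_rfl⟩ r hrIcc
    have htanR := htan R₁ hR₁0 ρ hρ
    have h1 : H' r ≤ H' R₁ := hH'mono r R₁ hr0.le (le_trans hrRδ hRδR₁)
    have h1' := mul_le_mul_of_nonneg_right h1 (by linarith : (0:ℝ) ≤ ρ - R₁)
    have hmono : H R₁ - H' r * (R₁ - r) - H r ≤ H ρ - H' r * (ρ - r) - H r := by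
      linarith [htanR, h1']
    have h2 : Rδ ^ 2 ≤ (R₁ - r) ^ 2 :=
      pow_le_pow_left₀ hRδ0.le (by linarith) 2
    have h2' := mul_le_mul_of_nonneg_left h2 (by linarith : (0:ℝ) ≤ m / 2)
    have hER2 : m / 2 * Rδ ^ 2 ≤ H ρ - H' r * (ρ - r) - H r := by linarith
    have hCE : C * (m / 2 * Rδ ^ 2) ≤ C * (H ρ - H' r * (ρ - r) - H r) :=
      mul_le_mul_of_nonneg_left hER2 hC0.le
    have hKC := mul_le_mul_of_nonneg_right hC1 (sq_nonneg Rδ)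
    rw [hqρ]
    have hz : (0 - q r) ^ 2 = (q r) ^ 2 := by ring
    rw [hz]
    linarith [hCE, hKC, hqr]
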